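/- arXiv:1610.00149 — 3 statements merged into one kernel-verified Lean document; each statement's English description precedes it below -/
import Mathlib

section
/- Let 0 ≤ g < 1, let G be a geometric random variable with P(G = r) = (1-g)·g^r for r ≥ 0, let n ≥ 0 be an integer, and let σ, t_suc, t_bit be real numbers and b : ℕ → ℝ a function. Then E[ σ·∑_{r=0}^{min(G,n)} b(r) + t_suc·1{G ≤ n} + t_bit·min(G, n+1) ] = σ·∑_{r=0}^{n} b(r)·g^r + t_suc·(1 - g^{n+1}) + t_bit·g·(1 - g^{n+1})/(1 - g). -/
lemma fin_id (g : ℝ) (hg : g ≠ 1) (σ t_suc t_bit : ℝ) (b : ℕ → ℝ) (n : ℕ) :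
    ∑ r ∈ Finset.range (n + 1), (1 - g) * g ^ r *
        (σ * (∑ j ∈ Finset.range (r + 1), b j) + t_suc + t_bit * r)
      + g ^ (n + 1) * (σ * (∑ j ∈ Finset.range (n + 1), b j) + t_bit * (n + 1))
    = σ * (∑ r ∈ Finset.range (n + 1), b r * g ^ r)
      + t_suc * (1 - g ^ (n + 1))
      + t_bit * g * (1 - g ^ (n + 1)) / (1 - g) := by
  have h1 : (1 : ℝ) - g ≠ 0 := sub_ne_zero.mpr hg.symm
  induction n with
  | zero => simp; field_simp; ring
  | succ n ih =>
    rw [Finset.sum_range_succ, Finset.sum_range_succ (f := fun r => b r * g ^ r),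
      Finset.sum_range_succ (f := b)]
    field_simp at ih ⊢
    linear_combination (norm := (push_cast; ring)) ih

/-- Expected total time a sender spends on one packet in IEEE 802.11 DCF with
no collisions: `G` geometric with `P(G = r) = (1-g)·g^r` (`0 ≤ g < 1`), retry
limit `n`, backoff slot `σ`, mean backoff counters `b r`, success duration
`t_suc`, bit-error duration `t_bit`.  Then
`E[σ·∑_{r=0}^{min(G,n)} b r + t_suc·1{G ≤ n} + t_bit·min(G, n+1)]
  = σ·∑_{r=0}^{n} b r·g^r + t_suc·(1 - g^(n+1)) + t_bit·g·(1 - g^(n+1))/(1 - g)`. -/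
theorem expected_cycle_time (g : ℝ) (hg0 : 0 ≤ g) (hg1 : g < 1) (n : ℕ)
    (σ t_suc t_bit : ℝ) (b : ℕ → ℝ) :
    ∑' r : ℕ, ((1 - g) * g ^ r) *
        (σ * (∑ j ∈ Finset.range (min r n + 1), b j)
          + t_suc * (if r ≤ n then (1 : ℝ) else 0)
          + t_bit * ((min r (n + 1) : ℕ) : ℝ))
      = σ * (∑ r ∈ Finset.range (n + 1), b r * g ^ r)
        + t_suc * (1 - g ^ (n + 1))
        + t_bit * g * (1 - g ^ (n + 1)) / (1 - g) := by
  have h1 : (1 : ℝ) - g ≠ 0 := sub_ne_zero.mpr (ne_of_lt hg1).symm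
  set f : ℕ → ℝ := fun r => ((1 - g) * g ^ r) *
        (σ * (∑ j ∈ Finset.range (min r n + 1), b j)
          + t_suc * (if r ≤ n then (1 : ℝ) else 0)
          + t_bit * ((min r (n + 1) : ℕ) : ℝ)) with hf
  set K : ℝ := σ * (∑ j ∈ Finset.range (n + 1), b j) + t_bit * (n + 1) with hK
  have htail : ∀ r : ℕ, f (r + (n + 1)) = ((1 - g) * g ^ (n + 1) * K) * g ^ r := by
    intro r
    have h2 : min (r + (n + 1)) n = n := min_eq_right (by omega)
    have h3 : ¬ (r + (n + 1) ≤ n) := by omega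
    have h4 : min (r + (n + 1)) (n + 1) = n + 1 := min_eq_right (by omega)
    simp only [hf, h2, h3, h4, if_neg, if_false, pow_add]
    push_cast
    ring
  have hsum_tail : Summable (fun r => f (r + (n + 1))) := by
    simp only [htail]
    exact (summable_geometric_of_lt_one hg0 hg1).mul_left _
  have hsum : Summable f := (summable_nat_add_iff (n + 1)).mp hsum_tail
  have hsplit := (Summable.sum_add_tsum_nat_add (n + 1) hsum).symm
  rw [hsplit]
  have htsum : ∑' r : ℕ, f (r + (n + 1)) = g ^ (n + 1) * K := by
    simp only [htail]
    rw [tsum_mul_left, tsum_geometric_of_lt_one hg0 hg1]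
    field_simp
  rw [htsum]
  have hhead : ∑ r ∈ Finset.range (n + 1), f r
      = ∑ r ∈ Finset.range (n + 1), (1 - g) * g ^ r *
        (σ * (∑ j ∈ Finset.range (r + 1), b j) + t_suc + t_bit * r) := by
    refine Finset.sum_congr rfl fun r hr => ?_
    have hr' : r ≤ n := by simpa [Nat.lt_succ_iff] using Finset.mem_range.mp hr
    simp only [hf]
    rw [min_eq_left hr', min_eq_left (show r ≤ n + 1 by omega), if_pos hr']
    ring
  rw [hhead, hK]
  exact fin_id g (ne_of_lt hg1) σ t_suc t_bit b n
end

section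
/- Let F : ℝ → ℝ be a nondecreasing function with F(y) = 0 for y ≤ 0 and F(y) → 1 as y → ∞, let ℓ_d > 0 and ℓ_h ≥ 0, and for ℓ_h ≤ x ≤ ℓ_d + ℓ_h define F^(E)(x) = ∑_{s=0}^{∞} (F(x + s·ℓ_d − ℓ_h) − F(s·ℓ_d)). Then for all ℓ_h ≤ x ≤ x' ≤ ℓ_d + ℓ_h, the defining series converge and 0 ≤ F^(E)(x) ≤ F^(E)(x') ≤ 1. -/
open Filter

/-- The edge-packet size distribution
`F^(E)(x) = ∑_{s=0}^∞ (F(x + s·ℓ_d − ℓ_h) − F(s·ℓ_d))` is well defined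
(the series converges), takes values in `[0,1]`, and is nondecreasing on
`[ℓ_h, ℓ_d + ℓ_h]`, where `F` is a nondecreasing message-size distribution
function vanishing on `(-∞,0]` and tending to `1` at `+∞`. -/
theorem edge_packet_distribution_wellDefined (F : ℝ → ℝ) (hmono : Monotone F)
    (h0 : ∀ y ≤ (0 : ℝ), F y = 0) (h1 : Tendsto F atTop (nhds 1))
    (ℓd ℓh : ℝ) (hd : 0 < ℓd) (hh : 0 ≤ ℓh)
    (x x' : ℝ) (hx : ℓh ≤ x) (hxx' : x ≤ x') (hx' : x' ≤ ℓd + ℓh) :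
    Summable (fun s : ℕ => F (x + (s : ℝ) * ℓd - ℓh) - F ((s : ℝ) * ℓd)) ∧
    Summable (fun s : ℕ => F (x' + (s : ℝ) * ℓd - ℓh) - F ((s : ℝ) * ℓd)) ∧
    0 ≤ ∑' s : ℕ, (F (x + (s : ℝ) * ℓd - ℓh) - F ((s : ℝ) * ℓd)) ∧
    (∑' s : ℕ, (F (x + (s : ℝ) * ℓd - ℓh) - F ((s : ℝ) * ℓd)))
      ≤ ∑' s : ℕ, (F (x' + (s : ℝ) * ℓd - ℓh) - F ((s : ℝ) * ℓd)) ∧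
    (∑' s : ℕ, (F (x' + (s : ℝ) * ℓd - ℓh) - F ((s : ℝ) * ℓd))) ≤ 1 := by
  -- F ≤ 1 everywhere
  have hF1 : ∀ y : ℝ, F y ≤ 1 := by
    intro y
    refine ge_of_tendsto h1 ?_
    filter_upwards [eventually_ge_atTop y] with z hz using hmono hz
  -- nonnegativity of terms
  have hnn : ∀ (z : ℝ), ℓh ≤ z → ∀ s : ℕ,
      0 ≤ F (z + (s : ℝ) * ℓd - ℓh) - F ((s : ℝ) * ℓd) := by
    intro z hz s
    have : (s : ℝ) * ℓd ≤ z + (s : ℝ) * ℓd - ℓh := by linarith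
    linarith [hmono this]
  -- partial-sum bound
  have hbound : ∀ (z : ℝ), z ≤ ℓd + ℓh → ∀ n : ℕ,
      (∑ s ∈ Finset.range n, (F (z + (s : ℝ) * ℓd - ℓh) - F ((s : ℝ) * ℓd))) ≤ 1 := by
    intro z hz n
    have step : ∀ s : ℕ,
        F (z + (s : ℝ) * ℓd - ℓh) - F ((s : ℝ) * ℓd)
          ≤ F (((s : ℕ) + 1 : ℕ) * ℓd) - F ((s : ℝ) * ℓd) := by
      intro s
      have : z + (s : ℝ) * ℓd - ℓh ≤ ((s : ℕ) + 1 : ℕ) * ℓd := by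
        push_cast; nlinarith
      linarith [hmono this]
    calc (∑ s ∈ Finset.range n, (F (z + (s : ℝ) * ℓd - ℓh) - F ((s : ℝ) * ℓd)))
        ≤ ∑ s ∈ Finset.range n, (F (((s + 1 : ℕ) : ℝ) * ℓd) - F ((s : ℝ) * ℓd)) := by
          refine Finset.sum_le_sum fun s _ => ?_
          have := step s; push_cast at this ⊢; linarith
      _ = F ((n : ℝ) * ℓd) - F (((0 : ℕ) : ℝ) * ℓd) :=
          Finset.sum_range_sub (fun s : ℕ => F ((s : ℝ) * ℓd)) n
      _ ≤ 1 := by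
          have h00 : F (((0 : ℕ) : ℝ) * ℓd) = 0 := by
            simp only [Nat.cast_zero, zero_mul]; exact h0 0 le_rfl
          rw [h00]; simpa using hF1 ((n : ℝ) * ℓd)
  have hSx : Summable (fun s : ℕ => F (x + (s : ℝ) * ℓd - ℓh) - F ((s : ℝ) * ℓd)) :=
    summable_of_sum_range_le (hnn x hx) (hbound x (le_trans hxx' hx'))
  have hSx' : Summable (fun s : ℕ => F (x' + (s : ℝ) * ℓd - ℓh) - F ((s : ℝ) * ℓd)) :=
    summable_of_sum_range_le (hnn x' (le_trans hx hxx')) (hbound x' hx')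
  refine ⟨hSx, hSx', tsum_nonneg (hnn x hx), ?_, ?_⟩
  · refine Summable.tsum_le_tsum (fun s => ?_) hSx hSx'
    have : x + (s : ℝ) * ℓd - ℓh ≤ x' + (s : ℝ) * ℓd - ℓh := by linarith
    linarith [hmono this]
  · exact Summable.tsum_le_of_sum_range_le hSx' (hbound x' hx')
end

section
/- Let n ≥ 1, let w_1, …, w_n > 0, let ℓ_1, …, ℓ_n > 0, let c ≥ 0, and set ℓ_max = max_i ℓ_i. For 0 < p < 1 define H(p) = ∑_{i=1}^{n} w_i ℓ_i (1−p)^{−(ℓ_i + c)} / ∑_{j=1}^{n} w_j (1−p)^{−(ℓ_j + c)}. Then H(p) → ℓ_max as p → 1⁻. -/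
open Finset Filter

/-- Conjecture 1 for discrete generated-packet size distributions: with
infinite retry limit and bit error rate `p`, the mean transferred packet size
`H(p) = ∑ᵢ wᵢ ℓᵢ (1−p)^{−(ℓᵢ+c)} / ∑ⱼ wⱼ (1−p)^{−(ℓⱼ+c)}` tends to the maximum
generated packet size `ℓ_max` as `p → 1⁻`. -/
theorem mean_transferred_size_tendsto_max (n : ℕ) (hn : 1 ≤ n)
    (w ℓ : Fin n → ℝ) (hw : ∀ i, 0 < w i) (hℓ : ∀ i, 0 < ℓ i)
    (c : ℝ) (hc : 0 ≤ c) (ℓmax : ℝ) (hmax : IsGreatest (Set.range ℓ) ℓmax) :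
    Tendsto (fun p : ℝ =>
        (∑ i, w i * ℓ i * (1 - p) ^ (-(ℓ i + c)))
          / (∑ j, w j * (1 - p) ^ (-(ℓ j + c))))
      (nhdsWithin 1 (Set.Ioo (0 : ℝ) 1)) (nhds ℓmax) := by
  obtain ⟨hmem, hub⟩ := hmax
  obtain ⟨i0, hi0⟩ := hmem
  have hle : ∀ i, ℓ i ≤ ℓmax := fun i => hub ⟨i, rfl⟩
  -- 1 - p tends to 0 from the right
  have hsub : Tendsto (fun p : ℝ => 1 - p) (nhdsWithin 1 (Set.Ioo (0 : ℝ) 1))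
      (nhdsWithin 0 (Set.Ioi 0)) := by
    apply tendsto_nhdsWithin_of_tendsto_nhds_of_eventually_within
    · have h1 : Tendsto (fun p : ℝ => 1 - p) (nhds 1) (nhds 0) := by
        simpa using (tendsto_const_nhds.sub tendsto_id :
          Tendsto (fun p : ℝ => 1 - p) (nhds 1) (nhds (1 - 1)))
      exact h1.mono_left nhdsWithin_le_nhds
    · filter_upwards [self_mem_nhdsWithin] with p hp
      exact sub_pos.mpr hp.2
  -- limit of t ^ a as t → 0+
  have hterm : ∀ a : ℝ, 0 ≤ a → Tendsto (fun t : ℝ => t ^ a)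
      (nhdsWithin 0 (Set.Ioi 0)) (nhds (if a = 0 then 1 else 0)) := by
    intro a ha
    rcases eq_or_lt_of_le ha with h0 | h0
    · rw [if_pos h0.symm]
      simpa [← h0, Real.rpow_zero] using (tendsto_const_nhds :
        Tendsto (fun _ : ℝ => (1 : ℝ)) (nhdsWithin 0 (Set.Ioi 0)) (nhds 1))
    · rw [if_neg (ne_of_gt h0)]
      have h := (Real.continuousAt_rpow_const 0 a (Or.inr h0.le)).tendsto
      rw [Real.zero_rpow (ne_of_gt h0)] at h
      exact h.mono_left nhdsWithin_le_nhds
  set N0 : ℝ := ∑ i, w i * ℓ i * (if ℓmax - ℓ i = 0 then 1 else 0) with hN0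
  set D0 : ℝ := ∑ j, w j * (if ℓmax - ℓ j = 0 then 1 else 0) with hD0
  have hNlim : Tendsto (fun p : ℝ => ∑ i, w i * ℓ i * (1 - p) ^ (ℓmax - ℓ i))
      (nhdsWithin 1 (Set.Ioo (0 : ℝ) 1)) (nhds N0) := by
    apply tendsto_finset_sum
    intro i _
    exact tendsto_const_nhds.mul ((hterm _ (sub_nonneg.mpr (hle i))).comp hsub)
  have hDlim : Tendsto (fun p : ℝ => ∑ j, w j * (1 - p) ^ (ℓmax - ℓ j))
      (nhdsWithin 1 (Set.Ioo (0 : ℝ) 1)) (nhds D0) := by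
    apply tendsto_finset_sum
    intro j _
    exact tendsto_const_nhds.mul ((hterm _ (sub_nonneg.mpr (hle j))).comp hsub)
  have hD0pos : 0 < D0 := by
    rw [hD0]
    apply Finset.sum_pos'
    · intro i _
      by_cases h : ℓmax - ℓ i = 0 <;> simp [h, (hw i).le]
    · refine ⟨i0, Finset.mem_univ _, ?_⟩
      rw [if_pos (by rw [hi0]; ring)]
      simpa using hw i0
  have hND : N0 = ℓmax * D0 := by
    rw [hN0, hD0, Finset.mul_sum]
    apply Finset.sum_congr rfl
    intro i _
    by_cases h : ℓmax - ℓ i = 0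
    · have : ℓ i = ℓmax := by linarith [sub_eq_zero.mp h]
      rw [if_pos h, this]; ring
    · rw [if_neg h]; ring
  -- the main function eventually agrees with the rescaled one
  have heq : ∀ᶠ p in nhdsWithin 1 (Set.Ioo (0 : ℝ) 1),
      (∑ i, w i * ℓ i * (1 - p) ^ (ℓmax - ℓ i)) / (∑ j, w j * (1 - p) ^ (ℓmax - ℓ j))
        = (∑ i, w i * ℓ i * (1 - p) ^ (-(ℓ i + c)))
            / (∑ j, w j * (1 - p) ^ (-(ℓ j + c))) := by
    filter_upwards [self_mem_nhdsWithin] with p hp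
    have ht : (0 : ℝ) < 1 - p := sub_pos.mpr hp.2
    have hk : (0 : ℝ) < (1 - p) ^ (-(ℓmax + c)) := Real.rpow_pos_of_pos ht _
    have hnum : ∑ i, w i * ℓ i * (1 - p) ^ (-(ℓ i + c))
        = (∑ i, w i * ℓ i * (1 - p) ^ (ℓmax - ℓ i)) * (1 - p) ^ (-(ℓmax + c)) := by
      rw [Finset.sum_mul]
      apply Finset.sum_congr rfl
      intro i _
      have hr : (1 - p) ^ (-(ℓ i + c)) = (1 - p) ^ (ℓmax - ℓ i) * (1 - p) ^ (-(ℓmax + c)) := by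
        rw [← Real.rpow_add ht]; ring_nf
      rw [hr]; ring
    have hden : ∑ j, w j * (1 - p) ^ (-(ℓ j + c))
        = (∑ j, w j * (1 - p) ^ (ℓmax - ℓ j)) * (1 - p) ^ (-(ℓmax + c)) := by
      rw [Finset.sum_mul]
      apply Finset.sum_congr rfl
      intro j _
      have hr : (1 - p) ^ (-(ℓ j + c)) = (1 - p) ^ (ℓmax - ℓ j) * (1 - p) ^ (-(ℓmax + c)) := by
        rw [← Real.rpow_add ht]; ring_nf
      rw [hr]; ring
    rw [hnum, hden, mul_div_mul_right _ _ (ne_of_gt hk)]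
  have : Tendsto (fun p : ℝ =>
      (∑ i, w i * ℓ i * (1 - p) ^ (ℓmax - ℓ i)) / (∑ j, w j * (1 - p) ^ (ℓmax - ℓ j)))
      (nhdsWithin 1 (Set.Ioo (0 : ℝ) 1)) (nhds (N0 / D0)) :=
    hNlim.div hDlim (ne_of_gt hD0pos)
  have hfin : N0 / D0 = ℓmax := by
    rw [hND, mul_div_assoc, div_self (ne_of_gt hD0pos), mul_one]
  rw [← hfin]
  exact this.congr' heq
end
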